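/- Let d, n ∈ ℕ and let x₁, …, x_n ∈ [0,1]^d. Then there exist monotone functions f₋, f₊ : [0,1]^d → [0,1] with f₋ ≤ f₊ pointwise, f₋(x_i) = f₊(x_i) for all i = 1, …, n, and ∫_{[0,1]^d} (f₊ − f₋) dλ^d ≥ 1 − n · 2^{−d}. Consequently, for every map φ : ℝⁿ → L₁([0,1]^d) there is a monotone function f ∈ {f₋, f₊} with ‖f − φ(f(x₁), …, f(x_n))‖_{L₁([0,1]^d)} ≥ (1/2)(1 − n · 2^{−d}). -/

import Mathlib

open MeasureTheory

lemma prod_bound (d : ℕ) (a : Fin d → ℝ) (h0 : ∀ j, 0 ≤ a j) (h1 : ∀ j, a j ≤ 1)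
    (h : (1/2 : ℝ)^d < ∏ j, a j) : ∏ j, (1 - a j) ≤ (1/2 : ℝ)^d := by
  have key : (∏ j, a j) * ∏ j, (1 - a j) ≤ ((1/2 : ℝ)^d)^2 := by
    rw [← Finset.prod_mul_distrib]
    calc ∏ j, a j * (1 - a j) ≤ ∏ _j : Fin d, (1/4 : ℝ) :=
          Finset.prod_le_prod (fun j _ => mul_nonneg (h0 j) (by linarith [h1 j]))
            (fun j _ => by nlinarith [sq_nonneg (a j - 1/2)])
      _ = ((1/2 : ℝ)^d)^2 := by
          rw [Finset.prod_const, Finset.card_univ, Fintype.card_fin,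
            show (1/4 : ℝ) = (1/2)^2 by norm_num, ← pow_mul, ← pow_mul, mul_comm]
  have hnn : (0:ℝ) ≤ ∏ j, (1 - a j) := Finset.prod_nonneg fun j _ => by linarith [h1 j]
  have hc : (0:ℝ) < (1/2:ℝ)^d := by positivity
  nlinarith [mul_le_mul_of_nonneg_right h.le hnn]

theorem stmt9 (d n : ℕ) (hd : 1 ≤ d) (hn : 1 ≤ n)
    (x : Fin n → Fin d → ℝ) (hx : ∀ i, x i ∈ Set.Icc (0 : Fin d → ℝ) 1) :
    ∃ fm fp : (Fin d → ℝ) → ℝ,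
      (∀ y ∈ Set.Icc (0 : Fin d → ℝ) 1, fm y ∈ Set.Icc (0 : ℝ) 1) ∧
      (∀ y ∈ Set.Icc (0 : Fin d → ℝ) 1, fp y ∈ Set.Icc (0 : ℝ) 1) ∧
      (∀ y ∈ Set.Icc (0 : Fin d → ℝ) 1, ∀ z ∈ Set.Icc (0 : Fin d → ℝ) 1,
        y ≤ z → fm y ≤ fm z) ∧
      (∀ y ∈ Set.Icc (0 : Fin d → ℝ) 1, ∀ z ∈ Set.Icc (0 : Fin d → ℝ) 1,
        y ≤ z → fp y ≤ fp z) ∧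
      (∀ y ∈ Set.Icc (0 : Fin d → ℝ) 1, fm y ≤ fp y) ∧
      (∀ i, fm (x i) = fp (x i)) ∧
      (1 - (n : ℝ) / 2 ^ d ≤ ∫ y in Set.Icc (0 : Fin d → ℝ) 1, (fp y - fm y)) ∧
      (∀ φ : (Fin n → ℝ) → Lp ℝ 1 ((volume : Measure (Fin d → ℝ)).restrict (Set.Icc 0 1)),
        ∃ f : (Fin d → ℝ) → ℝ, (f = fm ∨ f = fp) ∧
          1 / 2 * (1 - (n : ℝ) / 2 ^ d) ≤
            ∫ y in Set.Icc (0 : Fin d → ℝ) 1, |f y - φ (fun i => f (x i)) y|) := by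
  classical
  set I : Set (Fin d → ℝ) := Set.Icc (0 : Fin d → ℝ) 1 with hIdef
  have hx0 : ∀ i j, 0 ≤ x i j := fun i j => (hx i).1 j
  have hx1 : ∀ i j, x i j ≤ 1 := fun i j => (hx i).2 j
  set P : Fin n → Prop := fun i => (1/2 : ℝ)^d < ∏ j, x i j with hPdef
  set Um : Set (Fin d → ℝ) := {y | ∃ i, P i ∧ x i ≤ y} with hUmdef
  set V : Set (Fin d → ℝ) := {y | ∃ i, ¬ P i ∧ y ≤ x i} with hVdef
  set fm : (Fin d → ℝ) → ℝ := Um.indicator (fun _ => 1) with hfmdef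
  set fp : (Fin d → ℝ) → ℝ := (Vᶜ).indicator (fun _ => 1) with hfpdef
  -- disjointness
  have hdisj : ∀ y, y ∈ Um → y ∉ V := by
    rintro y ⟨i, hPi, hiy⟩ ⟨j, hPj, hyj⟩
    exact hPj (lt_of_lt_of_le hPi (Finset.prod_le_prod (fun k _ => hx0 i k)
      (fun k _ => le_trans (hiy k) (hyj k))))
  -- values of fm, fp
  have hfmval : ∀ y, fm y = if y ∈ Um then (1:ℝ) else 0 := fun y => Set.indicator_apply _ _ _
  have hfpval : ∀ y, fp y = if y ∈ V then (0:ℝ) else 1 := by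
    intro y
    rw [hfpdef, Set.indicator_apply]
    by_cases hy : y ∈ V <;> simp [hy]
  -- agreement at sample points
  have hagree : ∀ i, fm (x i) = fp (x i) := by
    intro i
    rw [hfmval, hfpval]
    by_cases hPi : P i
    · have h1 : x i ∈ Um := ⟨i, hPi, le_refl _⟩
      have h2 : x i ∉ V := hdisj _ h1
      simp [h1, h2]
    · have h2 : x i ∈ V := ⟨i, hPi, le_refl _⟩
      have h1 : x i ∉ Um := by
        rintro ⟨j, hPj, hji⟩
        exact hPi (lt_of_lt_of_le hPj (Finset.prod_le_prod (fun k _ => hx0 j k)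
          (fun k _ => hji k)))
      simp [h1, h2]
  -- pointwise difference
  have hfun : ∀ y, fp y - fm y = ((Um ∪ V)ᶜ).indicator (fun _ => (1:ℝ)) y := by
    intro y
    rw [hfmval, hfpval, Set.indicator_apply]
    by_cases h1 : y ∈ Um
    · have h2 : y ∉ V := hdisj _ h1
      simp [h1, h2]
    · by_cases h2 : y ∈ V <;> simp [h1, h2]
  -- measurability
  have hUmMeas : MeasurableSet Um := by
    have : Um = ⋃ i, ⋃ (_ : P i), Set.Ici (x i) := by
      ext y; simp [hUmdef, Set.mem_iUnion, Set.mem_Ici]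
    rw [this]
    exact MeasurableSet.iUnion fun i => MeasurableSet.iUnion fun _ => measurableSet_Ici
  have hVMeas : MeasurableSet V := by
    have : V = ⋃ i, ⋃ (_ : ¬ P i), Set.Iic (x i) := by
      ext y; simp [hVdef, Set.mem_iUnion, Set.mem_Iic]
    rw [this]
    exact MeasurableSet.iUnion fun i => MeasurableSet.iUnion fun _ => measurableSet_Iic
  have hBmeas : MeasurableSet (Um ∪ V) := hUmMeas.union hVMeas
  -- volume of I
  have hvolI : volume I = 1 := by
    rw [hIdef, Real.volume_Icc_pi]
    simp
  have hIfin : volume I < ⊤ := by rw [hvolI]; exact ENNReal.one_lt_top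
  -- bound on volume of bad set
  have hIB : volume (I ∩ (Um ∪ V)) ≤ (n : ENNReal) * ENNReal.ofReal ((1/2 : ℝ)^d) := by
    set C : Fin n → Set (Fin d → ℝ) :=
      fun i => if P i then Set.Icc (x i) 1 else Set.Icc 0 (x i) with hCdef
    have hsub : I ∩ (Um ∪ V) ⊆ ⋃ i, C i := by
      rintro y ⟨hyI, hyB⟩
      rcases hyB with ⟨i, hPi, hle⟩ | ⟨i, hPi, hle⟩
      · exact Set.mem_iUnion.2 ⟨i, by simp [hCdef, hPi]; exact ⟨hle, hyI.2⟩⟩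
      · exact Set.mem_iUnion.2 ⟨i, by simp [hCdef, hPi]; exact ⟨hyI.1, hle⟩⟩
    have hCi : ∀ i, volume (C i) ≤ ENNReal.ofReal ((1/2 : ℝ)^d) := by
      intro i
      by_cases hPi : P i
      · have : volume (C i) = ENNReal.ofReal (∏ j, (1 - x i j)) := by
          rw [hCdef]
          simp only [hPi, if_true]
          rw [Real.volume_Icc_pi, ← ENNReal.ofReal_prod_of_nonneg]
          · simp
          · intro j _; simp only [Pi.one_apply]; linarith [hx1 i j]
        rw [this]
        exact ENNReal.ofReal_le_ofReal (prod_bound d (x i) (hx0 i) (hx1 i) hPi)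
      · have : volume (C i) = ENNReal.ofReal (∏ j, x i j) := by
          rw [hCdef]
          simp only [hPi, if_false]
          rw [Real.volume_Icc_pi, ← ENNReal.ofReal_prod_of_nonneg]
          · simp
          · intro j _; simp only [Pi.zero_apply, sub_zero]; exact hx0 i j
        rw [this]
        exact ENNReal.ofReal_le_ofReal (not_lt.1 hPi)
    calc volume (I ∩ (Um ∪ V)) ≤ volume (⋃ i, C i) := measure_mono hsub
      _ ≤ ∑' i, volume (C i) := measure_iUnion_le _
      _ ≤ ∑' _i : Fin n, ENNReal.ofReal ((1/2 : ℝ)^d) := ENNReal.tsum_le_tsum hCi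
      _ = (n : ENNReal) * ENNReal.ofReal ((1/2 : ℝ)^d) := by
          rw [tsum_fintype]
          simp [Finset.sum_const, nsmul_eq_mul]
  -- split the volume
  have hsplit : volume (I ∩ (Um ∪ V)) + volume (I \ (Um ∪ V)) = 1 := by
    rw [measure_inter_add_diff I hBmeas, hvolI]
  set a : ENNReal := volume (I ∩ (Um ∪ V)) with hadef
  set b : ENNReal := volume (I \ (Um ∪ V)) with hbdef
  have haTop : a ≠ ⊤ := by
    intro h; rw [h] at hsplit; simp at hsplit
  have hbTop : b ≠ ⊤ := by
    intro h; rw [h] at hsplit; simp at hsplit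
  have habReal : a.toReal + b.toReal = 1 := by
    rw [← ENNReal.toReal_add haTop hbTop, hsplit]; simp
  have haReal : a.toReal ≤ (n : ℝ) * (1/2 : ℝ)^d := by
    have h1 : ((n : ENNReal) * ENNReal.ofReal ((1/2 : ℝ)^d)).toReal
        = (n : ℝ) * (1/2 : ℝ)^d := by
      rw [ENNReal.toReal_mul, ENNReal.toReal_ofReal (by positivity)]
      simp
    rw [← h1]
    exact ENNReal.toReal_mono (by finiteness) hIB
  have hhalf : (n : ℝ) / 2 ^ d = (n : ℝ) * (1/2 : ℝ)^d := by
    rw [div_pow]; ring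
  -- value of the integral
  have hint : ∫ y in I, (fp y - fm y) = b.toReal := by
    calc ∫ y in I, (fp y - fm y)
        = ∫ y in I, ((Um ∪ V)ᶜ).indicator (fun _ => (1:ℝ)) y := by
          simp only [hfun]
      _ = ∫ _y in I ∩ (Um ∪ V)ᶜ, (1:ℝ) := setIntegral_indicator hBmeas.compl
      _ = (volume (I ∩ (Um ∪ V)ᶜ)).toReal • (1:ℝ) := setIntegral_const 1
      _ = b.toReal := by rw [hbdef, Set.diff_eq, smul_eq_mul, mul_one]
  have hmain : 1 - (n : ℝ) / 2 ^ d ≤ ∫ y in I, (fp y - fm y) := by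
    rw [hint, hhalf]; linarith
  -- integrability
  have hone : IntegrableOn (fun _ => (1:ℝ)) I volume :=
    integrableOn_const hIfin.ne
  have hfmInt : IntegrableOn fm I volume := hone.indicator hUmMeas
  have hfpInt : IntegrableOn fp I volume := hone.indicator hVMeas.compl
  have hnn : ∀ y, 0 ≤ fp y - fm y := by
    intro y
    rw [hfun y]
    exact Set.indicator_nonneg (fun _ _ => zero_le_one) y
  refine ⟨fm, fp, ?_, ?_, ?_, ?_, ?_, hagree, hmain, ?_⟩
  · intro y _
    rw [hfmval]
    by_cases h : y ∈ Um <;> simp [h]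
  · intro y _
    rw [hfpval]
    by_cases h : y ∈ V <;> simp [h]
  · intro y _ z _ hyz
    rw [hfmval, hfmval]
    by_cases h : y ∈ Um
    · have hz : z ∈ Um := by
        obtain ⟨i, hPi, hle⟩ := h
        exact ⟨i, hPi, le_trans hle hyz⟩
      simp [h, hz]
    · by_cases h2 : z ∈ Um <;> simp [h, h2]
  · intro y _ z _ hyz
    rw [hfpval, hfpval]
    by_cases h : z ∈ V
    · have hy : y ∈ V := by
        obtain ⟨i, hPi, hle⟩ := h
        exact ⟨i, hPi, le_trans hyz hle⟩
      simp [h, hy]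
    · by_cases h2 : y ∈ V <;> simp [h, h2]
  · intro y _
    linarith [hnn y]
  · intro φ
    set g : (Fin d → ℝ) → ℝ := ⇑(φ (fun i => fm (x i))) with hgdef
    have hveq : (fun i => fp (x i)) = (fun i => fm (x i)) :=
      funext fun i => (hagree i).symm
    have hg : Integrable g (volume.restrict I) := L1.integrable_coeFn _
    have h2 : Integrable (fun y => |fp y - g y|) (volume.restrict I) :=
      (hfpInt.sub hg).abs
    have h3 : Integrable (fun y => |fm y - g y|) (volume.restrict I) :=
      (hfmInt.sub hg).abs
    have habs : ∫ y in I, |fp y - fm y| = ∫ y in I, (fp y - fm y) :=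
      integral_congr_ae (Filter.Eventually.of_forall fun y => abs_of_nonneg (hnn y))
    have htri : ∫ y in I, |fp y - fm y|
        ≤ (∫ y in I, |fp y - g y|) + ∫ y in I, |fm y - g y| := by
      calc ∫ y in I, |fp y - fm y|
          ≤ ∫ y in I, (|fp y - g y| + |fm y - g y|) := by
            refine integral_mono ((hfpInt.sub hfmInt).abs) (h2.add h3) fun y => ?_
            calc |fp y - fm y| ≤ |fp y - g y| + |g y - fm y| := abs_sub_le _ _ _
              _ = |fp y - g y| + |fm y - g y| := by rw [abs_sub_comm (g y)]
        _ = (∫ y in I, |fp y - g y|) + ∫ y in I, |fm y - g y| := integral_add h2 h3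
    have hsum : 1 - (n : ℝ) / 2 ^ d
        ≤ (∫ y in I, |fp y - g y|) + ∫ y in I, |fm y - g y| := by
      refine le_trans ?_ htri
      rw [habs]; exact hmain
    by_cases hc : 1 / 2 * (1 - (n : ℝ) / 2 ^ d) ≤ ∫ y in I, |fm y - g y|
    · exact ⟨fm, Or.inl rfl, hc⟩
    · refine ⟨fp, Or.inr rfl, ?_⟩
      rw [hveq, ← hgdef]
      push_neg at hc
      linarith
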